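/- Let η be an ordinal and α = ω^η (ordinal exponentiation). Then any filter F on α all of whose elements have order type α can be extended to an ultrafilter D on α all of whose elements have order type α. -/

import Mathlib

/-- `z` is an `E`-accumulation point of the `I`-indexed sequence `x`. -/
def IsAccPt {I X : Type*} [TopologicalSpace X] (E : Set (Set I)) (x : I → X) (z : X) : Prop :=
  ∀ U : Set X, IsOpen U → z ∈ U → {i | x i ∈ U} ∈ E

/-- `X` satisfies the `E`-accumulation property. -/
def AccProp {I : Type*} (X : Type*) [TopologicalSpace X] (E : Set (Set I)) : Prop :=
  ∀ x : I → X, ∃ z : X, IsAccPt E x z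

/-- A filter in the classical sense: a nonempty proper family closed under
finite intersections and supersets. -/
structure IsSetFilter {I : Type*} (F : Set (Set I)) : Prop where
  nonempty : F.Nonempty
  proper : (∅ : Set I) ∉ F
  inter : ∀ A ∈ F, ∀ B ∈ F, A ∩ B ∈ F
  mono : ∀ A ∈ F, ∀ B : Set I, A ⊆ B → B ∈ F

/-- A (set-)ultrafilter: a filter containing one of `J`, `Jᶜ` for every `J`. -/
def IsSetUltrafilter {I : Type*} (F : Set (Set I)) : Prop :=
  IsSetFilter F ∧ ∀ J : Set I, J ∈ F ∨ Jᶜ ∈ F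

/-- The order type of a subset of a well-ordered type, with the inherited order. -/
noncomputable def setOType {β : Type*} [LinearOrder β] [WellFoundedLT β] (S : Set β) : Ordinal :=
  Ordinal.type ((· < ·) : S → S → Prop)

/-- `X` satisfies the `α`-complete accumulation property `CAP*_α`: every `α`-indexed
sequence has a point all of whose open neighborhoods pick out a set of indices of
order type `α`. -/
def CAPstar (α : Ordinal) (X : Type*) [TopologicalSpace X] : Prop :=
  ∀ x : α.ToType → X, ∃ z : X, ∀ U : Set X, IsOpen U → z ∈ U →
    setOType {γ : α.ToType | x γ ∈ U} = α


open Ordinal Set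
open scoped InitialSeg

universe u

namespace Ordinal

noncomputable def nadd : Ordinal.{u} → Ordinal.{u} → Ordinal.{u}
  | a, b => max (⨆ x : Iio a, Order.succ (nadd x.1 b)) (⨆ x : Iio b, Order.succ (nadd a x.1))
termination_by o₁ o₂ => (o₁, o₂)
decreasing_by all_goals cases x; decreasing_tactic

end Ordinal

infixl:65 " ♯ " => Ordinal.nadd

namespace Ordinal

theorem nadd_le_iff {a b c : Ordinal.{u}} :
    b ♯ c ≤ a ↔ (∀ b' < b, b' ♯ c < a) ∧ ∀ c' < c, b ♯ c' < a := by
  rw [nadd, max_le_iff, Ordinal.iSup_le_iff, Ordinal.iSup_le_iff]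
  simp [Order.succ_le_iff]

theorem nadd_lt_nadd_right {b c : Ordinal} (h : b < c) (a : Ordinal) : b ♯ a < c ♯ a :=
  (nadd_le_iff.1 le_rfl).1 b h

theorem nadd_lt_nadd_left {b c : Ordinal} (h : b < c) (a : Ordinal) : a ♯ b < a ♯ c :=
  (nadd_le_iff.1 le_rfl).2 b h

theorem nadd_le_nadd_right {b c : Ordinal} (h : b ≤ c) (a : Ordinal) : b ♯ a ≤ c ♯ a := by
  rcases h.lt_or_eq with h | rfl
  · exact (nadd_lt_nadd_right h a).le
  · exact le_rfl

theorem nadd_le_nadd_left {b c : Ordinal} (h : b ≤ c) (a : Ordinal) : a ♯ b ≤ a ♯ c := by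
  rcases h.lt_or_eq with h | rfl
  · exact (nadd_lt_nadd_left h a).le
  · exact le_rfl

theorem nadd_lt_nadd_of_lt_of_le {a b c d : Ordinal} (h1 : a < b) (h2 : c ≤ d) :
    a ♯ c < b ♯ d :=
  (nadd_lt_nadd_right h1 c).trans_le (nadd_le_nadd_left h2 b)

theorem nadd_lt_nadd_of_le_of_lt {a b c d : Ordinal} (h1 : a ≤ b) (h2 : c < d) :
    a ♯ c < b ♯ d :=
  (nadd_le_nadd_right h1 c).trans_lt (nadd_lt_nadd_left h2 b)

theorem nadd_zero (a : Ordinal) : a ♯ 0 = a := by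
  induction a using Ordinal.induction with
  | h a IH =>
  refine le_antisymm ?_ ((StrictMono.id_le fun _ _ h => nadd_lt_nadd_right h 0) a)
  rw [nadd_le_iff]
  exact ⟨fun a' ha' => by rwa [IH a' ha'], fun c hc => by simp at hc⟩

end Ordinal


lemma my_exists_nat_decomp (e : Ordinal) (m : ℕ) (r a' : Ordinal) (hr : r < omega0 ^ e)
    (h : a' < omega0 ^ e * m + r) :
    ∃ (m' : ℕ) (r' : Ordinal), r' < omega0 ^ e ∧ a' = omega0 ^ e * m' + r' ∧
      ((m' = m ∧ r' < r) ∨ m' < m) := by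
  have he : (omega0 ^ e : Ordinal) ≠ 0 := opow_ne_zero _ omega0_ne_zero
  have hlt : a' < omega0 ^ e * (m + 1 : ℕ) := by
    have hdist : (omega0 : Ordinal) ^ e * ((m + 1 : ℕ) : Ordinal)
        = omega0 ^ e * m + omega0 ^ e := by
      push_cast
      simp [mul_add, mul_one, Ordinal.mul_succ]
    rw [hdist]
    exact h.trans_le (add_le_add_right hr.le _)
  have hd : a' / omega0 ^ e < ((m + 1 : ℕ) : Ordinal) := (Ordinal.div_lt he).2 hlt
  obtain ⟨m', hm'⟩ := Ordinal.lt_omega0.1 (hd.trans (nat_lt_omega0 _))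
  have hm'le : m' < m + 1 := by
    rw [hm'] at hd
    exact_mod_cast hd
  have hdecomp : a' = omega0 ^ e * m' + a' % omega0 ^ e := by
    conv_lhs => rw [← Ordinal.div_add_mod a' (omega0 ^ e)]
    rw [hm']
  refine ⟨m', a' % omega0 ^ e, Ordinal.mod_lt _ he, hdecomp, ?_⟩
  rcases Nat.lt_succ_iff_lt_or_eq.1 hm'le with h1 | rfl
  · exact Or.inr h1
  · refine Or.inl ⟨rfl, ?_⟩
    rw [hdecomp] at h
    exact lt_of_add_lt_add_left h

lemma my_nadd_decomp_le (e : Ordinal)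
    (H : ∀ x < omega0 ^ e, ∀ y < omega0 ^ e, x ♯ y < omega0 ^ e) :
    ∀ a b : Ordinal, ∀ m n : ℕ, ∀ r s : Ordinal, r < omega0 ^ e → s < omega0 ^ e →
      a = omega0 ^ e * m + r → b = omega0 ^ e * n + s →
      a ♯ b ≤ omega0 ^ e * ((m + n : ℕ) : Ordinal) + (r ♯ s) := by
  intro a
  induction a using Ordinal.induction with
  | h a IHa =>
  intro b
  induction b using Ordinal.induction with
  | h b IHb =>
  intro m n r s hr hs ha hb
  rw [Ordinal.nadd_le_iff]
  constructor
  · intro a' ha'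
    have ha'a : a' < a := ha'
    rw [ha] at ha'
    obtain ⟨m', r', hr', hd, hcase⟩ := my_exists_nat_decomp e m r a' hr ha'
    have hle := IHa a' ha'a b m' n r' s hr' hs hd hb
    rcases hcase with ⟨rfl, hrr⟩ | hmm
    · exact hle.trans_lt (add_lt_add_right (Ordinal.nadd_lt_nadd_right hrr s) _)
    · refine hle.trans_lt (lt_of_lt_of_le (add_lt_add_right (H r' hr' s hs) _) ?_)
      have : omega0 ^ e * ((m' + n : ℕ) : Ordinal) + omega0 ^ e
          = omega0 ^ e * ((m' + n + 1 : ℕ) : Ordinal) := by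
        push_cast
        simp [mul_add, mul_one, add_assoc, Ordinal.mul_succ]
      rw [this]
      refine le_trans (mul_le_mul_right ?_ _) le_self_add
      exact Nat.cast_le.2 (by omega)
  · intro b' hb'
    have hb'b : b' < b := hb'
    rw [hb] at hb'
    obtain ⟨n', s', hs', hd, hcase⟩ := my_exists_nat_decomp e n s b' hs hb'
    have hle := IHb b' hb'b m n' r s' hr hs' ha hd
    rcases hcase with ⟨rfl, hss⟩ | hnn
    · exact hle.trans_lt (add_lt_add_right (Ordinal.nadd_lt_nadd_left hss r) _)
    · refine hle.trans_lt (lt_of_lt_of_le (add_lt_add_right (H r hr s' hs') _) ?_)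
      have : omega0 ^ e * ((m + n' : ℕ) : Ordinal) + omega0 ^ e
          = omega0 ^ e * ((m + n' + 1 : ℕ) : Ordinal) := by
        push_cast
        simp [mul_add, mul_one, add_assoc, Ordinal.mul_succ]
      rw [this]
      refine le_trans (mul_le_mul_right ?_ _) le_self_add
      exact Nat.cast_le.2 (by omega)

lemma my_principal_nadd (η : Ordinal) :
    ∀ a < omega0 ^ η, ∀ b < omega0 ^ η, a ♯ b < omega0 ^ η := by
  induction η using Ordinal.induction with
  | h η IH =>
  intro a ha b hb
  rcases Ordinal.zero_or_succ_or_isSuccLimit η with rfl | ⟨e, rfl⟩ | hl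
  · rw [opow_zero, Ordinal.lt_one_iff_zero] at ha hb
    subst ha; subst hb
    rw [opow_zero, Ordinal.nadd_zero]
    exact zero_lt_one
  · have he : (omega0 ^ e : Ordinal) ≠ 0 := opow_ne_zero _ omega0_ne_zero
    have hae : a < omega0 ^ e * omega0 := by rwa [← opow_succ]
    have hbe : b < omega0 ^ e * omega0 := by rwa [← opow_succ]
    obtain ⟨m, hm⟩ := Ordinal.lt_omega0.1 ((Ordinal.div_lt he).2 hae)
    obtain ⟨n, hn⟩ := Ordinal.lt_omega0.1 ((Ordinal.div_lt he).2 hbe)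
    have ha' : a = omega0 ^ e * m + a % omega0 ^ e := by
      conv_lhs => rw [← Ordinal.div_add_mod a (omega0 ^ e)]
      rw [hm]
    have hb' : b = omega0 ^ e * n + b % omega0 ^ e := by
      conv_lhs => rw [← Ordinal.div_add_mod b (omega0 ^ e)]
      rw [hn]
    have He : ∀ x < omega0 ^ e, ∀ y < omega0 ^ e, x ♯ y < omega0 ^ e :=
      IH e (Order.lt_succ e)
    have hkey := my_nadd_decomp_le e He a b m n _ _ (Ordinal.mod_lt a he)
      (Ordinal.mod_lt b he) ha' hb'
    calc a ♯ b ≤ omega0 ^ e * ((m + n : ℕ) : Ordinal) + (a % omega0 ^ e ♯ b % omega0 ^ e) :=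
        hkey
      _ < omega0 ^ e * ((m + n : ℕ) : Ordinal) + omega0 ^ e :=
        add_lt_add_right (He _ (Ordinal.mod_lt a he) _ (Ordinal.mod_lt b he)) _
      _ = omega0 ^ e * ((m + n + 1 : ℕ) : Ordinal) := by push_cast; simp [mul_add, mul_one, add_assoc, Ordinal.mul_succ]
      _ < omega0 ^ e * omega0 :=
        mul_lt_mul_of_pos_left (nat_lt_omega0 _) (opow_pos _ omega0_pos)
      _ = omega0 ^ Order.succ e := (opow_succ _ _).symm
  · obtain ⟨e1, he1, ha1⟩ := (lt_opow_of_isSuccLimit omega0_ne_zero hl).1 ha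
    obtain ⟨e2, he2, hb2⟩ := (lt_opow_of_isSuccLimit omega0_ne_zero hl).1 hb
    have h1 : a < omega0 ^ max e1 e2 :=
      ha1.trans_le (opow_le_opow_right omega0_pos (le_max_left _ _))
    have h2 : b < omega0 ^ max e1 e2 :=
      hb2.trans_le (opow_le_opow_right omega0_pos (le_max_right _ _))
    exact (IH _ (max_lt he1 he2) a h1 b h2).trans_le
      (opow_le_opow_right omega0_pos (max_lt he1 he2).le)



section OType
variable {β : Type*} [LinearOrder β] [WellFoundedLT β]

lemma my_setOType_mono {S T : Set β} (h : S ⊆ T) : setOType S ≤ setOType T :=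
  RelEmbedding.ordinal_type_le
    ⟨⟨Set.inclusion h, Set.inclusion_injective h⟩, Iff.rfl⟩

lemma my_setOType_le (S : Set β) :
    setOType S ≤ Ordinal.type ((· < ·) : β → β → Prop) :=
  RelEmbedding.ordinal_type_le ⟨⟨Subtype.val, Subtype.val_injective⟩, Iff.rfl⟩

lemma my_setOType_sep_lt {S : Set β} {x : β} (hx : x ∈ S) :
    setOType {z ∈ S | z < x} < setOType S := by
  have hsub : {z ∈ S | z < x} ⊆ S := fun z hz => hz.1
  refine PrincipalSeg.ordinal_type_lt
    (⟨⟨⟨Set.inclusion hsub, Set.inclusion_injective hsub⟩, Iff.rfl⟩, ⟨x, hx⟩, ?_⟩ :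
      ((· < ·) : {z ∈ S | z < x} → {z ∈ S | z < x} → Prop) ≺i
      ((· < ·) : S → S → Prop))
  intro b
  constructor
  · rintro ⟨a, rfl⟩
    exact a.2.2
  · intro hb
    exact ⟨⟨b.1, ⟨b.2, hb⟩⟩, rfl⟩

lemma my_type_le_of_forall_lt {τ : Type*} (r : τ → τ → Prop) [IsWellOrder τ r]
    (f : τ → Ordinal) (hf : ∀ x y, r x y → f x < f y) {c : Ordinal}
    (hc : ∀ x, f x < c) : Ordinal.type r ≤ c := by
  have key : ∀ x, Ordinal.typein r x ≤ f x := by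
    intro x
    apply IsWellFounded.induction r (motive := fun x => Ordinal.typein r x ≤ f x) x
    intro x IH
    by_contra hlt
    rw [not_le] at hlt
    obtain ⟨y, hy⟩ := Ordinal.typein_surj r (hlt.trans (Ordinal.typein_lt_type r x))
    have hyx : r y x := (Ordinal.typein_lt_typein r).1 (by rw [hy]; exact hlt)
    have h1 := hf y x hyx
    rw [← hy] at h1
    exact (IH y hyx).not_gt h1
  by_contra hc'
  rw [not_le] at hc'
  obtain ⟨x, hx⟩ := Ordinal.typein_surj r hc'
  have := (key x).trans_lt (hc x)
  rw [hx] at this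
  exact this.false

lemma my_setOType_union_le (A B : Set β) :
    setOType (A ∪ B) ≤ setOType A ♯ setOType B := by
  have hmono : ∀ (C : Set β) {x y : β}, x < y →
      setOType {z ∈ C | z < x} ≤ setOType {z ∈ C | z < y} := by
    intro C x y hxy
    exact my_setOType_mono (fun z hz => ⟨hz.1, hz.2.trans hxy⟩)
  have hstrict : ∀ (C : Set β) {x y : β}, x ∈ C → x < y →
      setOType {z ∈ C | z < x} < setOType {z ∈ C | z < y} := by
    intro C x y hxC hxy
    have hset : {z ∈ {z ∈ C | z < y} | z < x} = {z ∈ C | z < x} := by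
      ext z
      exact ⟨fun h => ⟨h.1.1, h.2⟩, fun h => ⟨⟨h.1, h.2.trans hxy⟩, h.2⟩⟩
    have := my_setOType_sep_lt (S := {z ∈ C | z < y}) (x := x) ⟨hxC, hxy⟩
    rwa [hset] at this
  refine my_type_le_of_forall_lt _
    (fun x => setOType {z ∈ A | z < x.1} ♯ setOType {z ∈ B | z < x.1}) ?_ ?_
  · rintro x y hxy
    have hxy' : (x : β) < (y : β) := hxy
    rcases x.2 with hxA | hxB
    · exact Ordinal.nadd_lt_nadd_of_lt_of_le (hstrict A hxA hxy') (hmono B hxy')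
    · exact Ordinal.nadd_lt_nadd_of_le_of_lt (hmono A hxy') (hstrict B hxB hxy')
  · intro x
    rcases x.2 with hxA | hxB
    · refine Ordinal.nadd_lt_nadd_of_lt_of_le ?_ (my_setOType_mono (fun z hz => hz.1))
      exact my_setOType_sep_lt hxA
    · refine Ordinal.nadd_lt_nadd_of_le_of_lt (my_setOType_mono (fun z hz => hz.1)) ?_
      exact my_setOType_sep_lt hxB

end OType

theorem stmt9 (η : Ordinal) (α : Ordinal) (hα : α = Ordinal.omega0 ^ η)
    (F : Set (Set α.ToType)) (hF : IsSetFilter F)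
    (hunif : ∀ S ∈ F, setOType S = α) :
    ∃ D : Set (Set α.ToType), IsSetUltrafilter D ∧ F ⊆ D ∧
      ∀ S ∈ D, setOType S = α := by
  classical
  have hα0 : (0 : Ordinal) < α := by rw [hα]; exact opow_pos _ omega0_pos
  have hle : ∀ S : Set α.ToType, setOType S ≤ α := by
    intro S
    have h := my_setOType_le S
    rwa [Ordinal.type_toType] at h
  have hsmall_union : ∀ A B : Set α.ToType,
      setOType A < α → setOType B < α → setOType (A ∪ B) < α := by
    intro A B h1 h2
    refine (my_setOType_union_le A B).trans_lt ?_
    exact lt_of_lt_of_eq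
      (my_principal_nadd η _ (lt_of_lt_of_eq h1 hα) _ (lt_of_lt_of_eq h2 hα)) hα.symm
  let FF : Filter α.ToType :=
    { sets := F
      univ_sets := by
        obtain ⟨A, hA⟩ := hF.nonempty
        exact hF.mono A hA _ (Set.subset_univ A)
      sets_of_superset := fun hA hAB => hF.mono _ hA _ hAB
      inter_sets := fun hA hB => hF.inter _ hA _ hB }
  let K : Filter α.ToType :=
    { sets := {S | setOType Sᶜ < α}
      univ_sets := by
        simp only [Set.mem_setOf_eq, Set.compl_univ]
        have h0 : setOType (∅ : Set α.ToType) = 0 := Ordinal.type_eq_zero_of_empty _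
        rw [h0]; exact hα0
      sets_of_superset := fun {A B} hA hAB =>
        lt_of_le_of_lt (my_setOType_mono (Set.compl_subset_compl.2 hAB)) hA
      inter_sets := fun {A B} hA hB => by
        simp only [Set.mem_setOf_eq, Set.compl_inter]
        exact hsmall_union _ _ hA hB }
  have hFFmem : ∀ {S}, S ∈ F → S ∈ FF := fun h => h
  have hKmem : ∀ {S : Set α.ToType}, setOType Sᶜ < α → S ∈ K := fun h => h
  have hNeBot : Filter.NeBot (FF ⊓ K) := by
    rw [Filter.neBot_iff]
    intro hbot
    rw [Filter.inf_eq_bot_iff] at hbot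
    obtain ⟨U, hU, V, hV, hUV⟩ := hbot
    have hUV' : U ⊆ Vᶜ := fun x hx hxV =>
      (Set.eq_empty_iff_forall_notMem.1 hUV x) ⟨hx, hxV⟩
    have hhh : α ≤ setOType Vᶜ := (hunif U hU).symm.le.trans (my_setOType_mono hUV')
    exact (hhh.trans_lt hV).false
  haveI := hNeBot
  set U := Ultrafilter.of (FF ⊓ K) with hU
  have hUle : (U : Filter α.ToType) ≤ FF ⊓ K := Ultrafilter.of_le _
  have hmemU : ∀ {S : Set α.ToType}, S ∈ FF ⊓ K → S ∈ (U : Filter α.ToType) :=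
    fun h => Filter.le_def.1 hUle _ h
  refine ⟨{S | S ∈ (U : Filter α.ToType)}, ⟨⟨⟨Set.univ, Filter.univ_mem⟩, ?_, ?_, ?_⟩, ?_⟩,
    ?_, ?_⟩
  · exact fun h => Filter.empty_notMem _ h
  · exact fun A hA B hB => Filter.inter_mem hA hB
  · exact fun A hA B hAB => Filter.mem_of_superset hA hAB
  · exact fun J => U.mem_or_compl_mem J
  · intro S hS
    exact hmemU (Filter.le_def.1 inf_le_left S (hFFmem hS))
  · intro S hS
    refine le_antisymm (hle S) (not_lt.1 fun hlt => ?_)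
    have hSc : Sᶜ ∈ K := hKmem (by rwa [compl_compl])
    have hScU : Sᶜ ∈ (U : Filter α.ToType) := hmemU (Filter.le_def.1 inf_le_right _ hSc)
    have hint := Filter.inter_mem hS hScU
    rw [Set.inter_compl_self] at hint
    exact Filter.empty_notMem (U : Filter α.ToType) hint
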